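/- Let 0 < δ < δ′ < 1 and c > 0, B > 0. Then there exist l > 0 and C > 0, depending only on δ, δ′, c and B, with the following property: for every R > 0 and every function V : [−R,R] → [0,B] satisfying V(t) ≤ (1/(e^l − 1)) (V(t+l) + V(t−l)) + c(l+1) e^{δ′(l−R)} (e^{δ′t} + e^{−δ′t}) for all t with [t−l, t+l] ⊆ [−R,R], one has V(t) ≤ C e^{−δR} (e^{δt} + e^{−δt}) for all t ∈ [−R,R]. No continuity of V is assumed. -/

import Mathlib

open Real Filter Topology

set_option maxHeartbeats 4000000 in
/-- Discrete recursion lemma: given `0 < δ < δ′ < 1`, `c > 0`, `B > 0`, there are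
`l > 0` and `C > 0` such that for every `R > 0`, every function
`V : [−R,R] → [0,B]` satisfying the two-point averaging inequality
`V(t) ≤ (1/(e^l−1))(V(t+l)+V(t−l)) + c(l+1)e^{δ′(l−R)}(e^{δ′t}+e^{−δ′t})`
(whenever `[t−l,t+l] ⊆ [−R,R]`) satisfies
`V(t) ≤ C e^{−δR}(e^{δt}+e^{−δt})` on all of `[−R,R]`. -/
theorem discrete_recursion_decay (δ δ' c B : ℝ) (hδ : 0 < δ) (hδδ' : δ < δ')
    (hδ' : δ' < 1) (hc : 0 < c) (hB : 0 < B) :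
    ∃ l : ℝ, 0 < l ∧ ∃ C : ℝ, 0 < C ∧ ∀ R : ℝ, 0 < R → ∀ V : ℝ → ℝ,
      (∀ t : ℝ, -R ≤ t → t ≤ R → 0 ≤ V t ∧ V t ≤ B) →
      (∀ t : ℝ, -R ≤ t - l → t + l ≤ R →
        V t ≤ 1 / (Real.exp l - 1) * (V (t + l) + V (t - l)) +
          c * (l + 1) * Real.exp (δ' * (l - R)) *
            (Real.exp (δ' * t) + Real.exp (-(δ' * t)))) →
      ∀ t : ℝ, -R ≤ t → t ≤ R →
        V t ≤ C * Real.exp (-(δ * R)) *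
          (Real.exp (δ * t) + Real.exp (-(δ * t))) := by
  have h1δ : 0 < 1 - δ := by linarith
  set l : ℝ := max 1 (Real.log 5 / (1 - δ)) with hl_def
  have hl1 : (1:ℝ) ≤ l := le_max_left _ _
  have hl0 : 0 < l := lt_of_lt_of_le one_pos hl1
  have hlog : Real.log 5 / (1 - δ) ≤ l := le_max_right _ _
  have h5 : 5 * Real.exp (δ * l) ≤ Real.exp l := by
    have h1 : Real.log 5 ≤ (1 - δ) * l := by
      rw [div_le_iff₀ h1δ] at hlog; linarith
    have h2 : (5:ℝ) ≤ Real.exp ((1 - δ) * l) := by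
      calc (5:ℝ) = Real.exp (Real.log 5) := (Real.exp_log (by norm_num)).symm
        _ ≤ _ := Real.exp_le_exp.mpr h1
    have h3 : Real.exp l = Real.exp ((1 - δ) * l) * Real.exp (δ * l) := by
      rw [← Real.exp_add]; ring_nf
    rw [h3]
    nlinarith [Real.exp_pos (δ * l)]
  have hδl1 : (1:ℝ) ≤ Real.exp (δ * l) := Real.one_le_exp (by positivity)
  have hδl1' : Real.exp (-(δ * l)) ≤ 1 := Real.exp_le_one_iff.mpr (by nlinarith)
  have hE4 : (4:ℝ) ≤ Real.exp l - 1 := by nlinarith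
  have hE0 : (0:ℝ) < Real.exp l - 1 := by linarith
  have hρ : Real.exp (δ * l) + Real.exp (-(δ * l)) ≤ (Real.exp l - 1) / 2 := by
    nlinarith
  set K : ℝ := c * (l + 1) * Real.exp (δ' * l) with hK_def
  have hK0 : 0 < K := by positivity
  set C : ℝ := B * Real.exp (δ * l) + 2 * K with hC_def
  have hC0 : 0 < C := by positivity
  have hCB : B * Real.exp (δ * l) ≤ C := by linarith
  have hCK : 2 * K ≤ C := by nlinarith [Real.exp_pos (δ * l)]
  clear_value l K C
  refine ⟨l, hl0, C, hC0, ?_⟩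
  intro R hR V hVB hrec
  have hll : Real.exp (δ * l) * Real.exp (-(δ * l)) = 1 := by
    rw [← Real.exp_add]; simp
  -- main induction
  have key : ∀ n : ℕ, ∀ t : ℝ, -R ≤ t → t ≤ R →
      V t ≤ C * Real.exp (-(δ * R)) * (Real.exp (δ * t) + Real.exp (-(δ * t)))
        + B * (1/2 : ℝ) ^ n := by
    intro n
    induction n with
    | zero =>
      intro t ht1 ht2
      have h := (hVB t ht1 ht2).2
      have hpos : 0 ≤ C * Real.exp (-(δ * R)) *
          (Real.exp (δ * t) + Real.exp (-(δ * t))) := by positivity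
      simpa using by linarith
    | succ n ih =>
      intro t ht1 ht2
      set W : ℝ := C * Real.exp (-(δ * R)) *
          (Real.exp (δ * t) + Real.exp (-(δ * t))) with hW_def
      have hW0 : 0 ≤ W := by positivity
      clear_value W
      by_cases hint : -R ≤ t - l ∧ t + l ≤ R
      · obtain ⟨hi1, hi2⟩ := hint
        have ha := ih (t + l) (by linarith) hi2
        have hb := ih (t - l) hi1 (by linarith)
        have hrt := hrec t hi1 hi2
        have e1 : Real.exp (δ * (t + l)) = Real.exp (δ * t) * Real.exp (δ * l) := by
          rw [← Real.exp_add]; ring_nf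
        have e2 : Real.exp (-(δ * (t + l))) =
            Real.exp (-(δ * t)) * Real.exp (-(δ * l)) := by
          rw [← Real.exp_add]; ring_nf
        have e3 : Real.exp (δ * (t - l)) = Real.exp (δ * t) * Real.exp (-(δ * l)) := by
          rw [← Real.exp_add]; ring_nf
        have e4 : Real.exp (-(δ * (t - l))) =
            Real.exp (-(δ * t)) * Real.exp (δ * l) := by
          rw [← Real.exp_add]; ring_nf
        -- sum of the two shifted barriers
        have heq : C * Real.exp (-(δ * R)) *
              (Real.exp (δ * (t + l)) + Real.exp (-(δ * (t + l))))
            + C * Real.exp (-(δ * R)) *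
              (Real.exp (δ * (t - l)) + Real.exp (-(δ * (t - l))))
            = W * (Real.exp (δ * l) + Real.exp (-(δ * l))) := by
          rw [e1, e2, e3, e4, hW_def]; ring
        have hsum : V (t + l) + V (t - l) ≤
            W * (Real.exp (δ * l) + Real.exp (-(δ * l))) + 2 * (B * (1/2:ℝ)^n) := by
          linarith
        have hq0 : 0 ≤ B * (1/2:ℝ)^n := by positivity
        have hX : W * (Real.exp (δ * l) + Real.exp (-(δ * l))) + 2 * (B * (1/2:ℝ)^n)
            ≤ (W / 2 + B * (1/2:ℝ)^n / 2) * (Real.exp l - 1) := by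
          nlinarith [mul_nonneg hW0 (sub_nonneg.mpr hρ)]
        have hfrac : 1 / (Real.exp l - 1) * (V (t + l) + V (t - l)) ≤
            W / 2 + B * (1/2:ℝ)^n / 2 := by
          rw [one_div, inv_mul_le_iff₀ hE0]
          calc V (t + l) + V (t - l)
              ≤ W * (Real.exp (δ * l) + Real.exp (-(δ * l))) + 2 * (B * (1/2:ℝ)^n) :=
                hsum
            _ ≤ (W / 2 + B * (1/2:ℝ)^n / 2) * (Real.exp l - 1) := hX
            _ = (Real.exp l - 1) * (W / 2 + B * (1/2:ℝ)^n / 2) := by ring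
        -- inhomogeneous term
        have f1 : Real.exp (δ' * (l - R)) * Real.exp (δ' * t)
            = Real.exp (δ' * l) * Real.exp (δ' * (t - R)) := by
          rw [← Real.exp_add, ← Real.exp_add]; ring_nf
        have f2 : Real.exp (δ' * (l - R)) * Real.exp (-(δ' * t))
            = Real.exp (δ' * l) * Real.exp (-(δ' * (t + R))) := by
          rw [← Real.exp_add, ← Real.exp_add]; ring_nf
        have g1 : Real.exp (δ' * (t - R)) ≤ Real.exp (δ * (t - R)) :=
          Real.exp_le_exp.mpr (by nlinarith)
        have g2 : Real.exp (-(δ' * (t + R))) ≤ Real.exp (-(δ * (t + R))) :=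
          Real.exp_le_exp.mpr (by nlinarith)
        have g3 : Real.exp (δ * (t - R)) = Real.exp (δ * t) * Real.exp (-(δ * R)) := by
          rw [← Real.exp_add]; ring_nf
        have g4 : Real.exp (-(δ * (t + R))) =
            Real.exp (-(δ * t)) * Real.exp (-(δ * R)) := by
          rw [← Real.exp_add]; ring_nf
        have hinh : c * (l + 1) * Real.exp (δ' * (l - R)) *
            (Real.exp (δ' * t) + Real.exp (-(δ' * t))) ≤ W / 2 := by
          have hcl : 0 < c * (l + 1) := by positivity
          calc c * (l + 1) * Real.exp (δ' * (l - R)) *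
                (Real.exp (δ' * t) + Real.exp (-(δ' * t)))
              = K * (Real.exp (δ' * (t - R)) + Real.exp (-(δ' * (t + R)))) := by
                rw [hK_def]
                linear_combination (c * (l + 1)) * f1 + (c * (l + 1)) * f2
            _ ≤ K * (Real.exp (δ * (t - R)) + Real.exp (-(δ * (t + R)))) := by
                apply mul_le_mul_of_nonneg_left (by linarith) (le_of_lt hK0)
            _ = K * Real.exp (-(δ * R)) *
                (Real.exp (δ * t) + Real.exp (-(δ * t))) := by
                rw [g3, g4]; ring
            _ ≤ W / 2 := by
                rw [hW_def]
                have hpos : 0 ≤ Real.exp (-(δ * R)) *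
                    (Real.exp (δ * t) + Real.exp (-(δ * t))) := by positivity
                nlinarith
        have hpow : B * (1/2:ℝ)^(n+1) = B * (1/2:ℝ)^n / 2 := by
          rw [pow_succ]; ring
        calc V t ≤ 1 / (Real.exp l - 1) * (V (t + l) + V (t - l)) +
              c * (l + 1) * Real.exp (δ' * (l - R)) *
                (Real.exp (δ' * t) + Real.exp (-(δ' * t))) := hrt
          _ ≤ (W / 2 + B * (1/2:ℝ)^n / 2) + W / 2 := by linarith
          _ = W + B * (1/2:ℝ)^(n+1) := by rw [hpow]; ring
      · -- boundary case : V t ≤ B ≤ W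
        have hBW : B ≤ W := by
          have hcase : t - l < -R ∨ R < t + l := by
            by_contra hcon
            push_neg at hcon
            exact hint ⟨hcon.1, hcon.2⟩
          have hRR : Real.exp (δ * R) * Real.exp (-(δ * R)) = 1 := by
            rw [← Real.exp_add]; simp
          rcases hcase with hcase | hcase
          · -- t < -R + l, so e^{-δt} ≥ e^{δ(R-l)}
            have h1 : Real.exp (δ * R) * Real.exp (-(δ * l)) ≤ Real.exp (-(δ * t)) := by
              rw [← Real.exp_add]
              apply Real.exp_le_exp.mpr
              have h0 : δ * (R - l + t) ≤ 0 :=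
                mul_nonpos_of_nonneg_of_nonpos hδ.le (by linarith)
              calc δ * R + -(δ * l) = δ * (R - l + t) + -(δ * t) := by ring
                _ ≤ 0 + -(δ * t) := by linarith
                _ = -(δ * t) := by ring
            have h2 : B ≤ C * Real.exp (-(δ * R)) * Real.exp (-(δ * t)) := by
              have h3 : C * Real.exp (-(δ * R)) * (Real.exp (δ * R) * Real.exp (-(δ * l)))
                  ≤ C * Real.exp (-(δ * R)) * Real.exp (-(δ * t)) :=
                mul_le_mul_of_nonneg_left h1 (by positivity)
              have h4 : C * Real.exp (-(δ * R)) * (Real.exp (δ * R) * Real.exp (-(δ * l)))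
                  = C * Real.exp (-(δ * l)) := by
                calc C * Real.exp (-(δ * R)) * (Real.exp (δ * R) * Real.exp (-(δ * l)))
                    = C * Real.exp (-(δ * l)) *
                      (Real.exp (δ * R) * Real.exp (-(δ * R))) := by ring
                  _ = C * Real.exp (-(δ * l)) := by rw [hRR, mul_one]
              have h5 : B ≤ C * Real.exp (-(δ * l)) := by
                have := mul_le_mul_of_nonneg_right hCB (le_of_lt (Real.exp_pos (-(δ * l))))
                calc B = B * (Real.exp (δ * l) * Real.exp (-(δ * l))) := by
                      rw [hll, mul_one]
                  _ = B * Real.exp (δ * l) * Real.exp (-(δ * l)) := by ring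
                  _ ≤ C * Real.exp (-(δ * l)) := this
              rw [h4] at h3; linarith
            rw [hW_def]
            exact le_trans h2 (mul_le_mul_of_nonneg_left
              (le_add_of_nonneg_left (Real.exp_pos _).le) (by positivity))
          · -- t > R - l, so e^{δt} ≥ e^{δ(R-l)}
            have h1 : Real.exp (δ * R) * Real.exp (-(δ * l)) ≤ Real.exp (δ * t) := by
              rw [← Real.exp_add]
              apply Real.exp_le_exp.mpr
              have h0 : δ * (R - l - t) ≤ 0 :=
                mul_nonpos_of_nonneg_of_nonpos hδ.le (by linarith)
              calc δ * R + -(δ * l) = δ * (R - l - t) + δ * t := by ring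
                _ ≤ 0 + δ * t := by linarith
                _ = δ * t := by ring
            have h2 : B ≤ C * Real.exp (-(δ * R)) * Real.exp (δ * t) := by
              have h3 : C * Real.exp (-(δ * R)) * (Real.exp (δ * R) * Real.exp (-(δ * l)))
                  ≤ C * Real.exp (-(δ * R)) * Real.exp (δ * t) :=
                mul_le_mul_of_nonneg_left h1 (by positivity)
              have h4 : C * Real.exp (-(δ * R)) * (Real.exp (δ * R) * Real.exp (-(δ * l)))
                  = C * Real.exp (-(δ * l)) := by
                calc C * Real.exp (-(δ * R)) * (Real.exp (δ * R) * Real.exp (-(δ * l)))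
                    = C * Real.exp (-(δ * l)) *
                      (Real.exp (δ * R) * Real.exp (-(δ * R))) := by ring
                  _ = C * Real.exp (-(δ * l)) := by rw [hRR, mul_one]
              have h5 : B ≤ C * Real.exp (-(δ * l)) := by
                have := mul_le_mul_of_nonneg_right hCB (le_of_lt (Real.exp_pos (-(δ * l))))
                calc B = B * (Real.exp (δ * l) * Real.exp (-(δ * l))) := by
                      rw [hll, mul_one]
                  _ = B * Real.exp (δ * l) * Real.exp (-(δ * l)) := by ring
                  _ ≤ C * Real.exp (-(δ * l)) := this
              rw [h4] at h3; linarith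
            rw [hW_def]
            exact le_trans h2 (mul_le_mul_of_nonneg_left
              (le_add_of_nonneg_right (Real.exp_pos _).le) (by positivity))
        have h := (hVB t ht1 ht2).2
        have hq : 0 ≤ B * (1/2:ℝ)^(n+1) := by positivity
        linarith
  -- pass to the limit
  intro t ht1 ht2
  have hlim : Tendsto (fun n : ℕ => C * Real.exp (-(δ * R)) *
      (Real.exp (δ * t) + Real.exp (-(δ * t))) + B * (1/2:ℝ)^n) atTop
      (𝓝 (C * Real.exp (-(δ * R)) * (Real.exp (δ * t) + Real.exp (-(δ * t))) + B * 0)) := by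
    exact tendsto_const_nhds.add
      ((tendsto_pow_atTop_nhds_zero_of_lt_one (by norm_num) (by norm_num)).const_mul B)
  have := ge_of_tendsto' hlim (fun n => key n t ht1 ht2)
  linarith
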